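/- Duality of weighted norms: for a full-rank density operator ρ on a finite-dimensional Hilbert space and any Hermitian operator f, ‖f‖_{L¹(ρ)} = sup{ ⟨g, f⟩_ρ : g Hermitian, ‖g‖_∞ ≤ 1 }, where ⟨g,f⟩_ρ = Tr[ρ^{1/2} g ρ^{1/2} f] and ‖f‖_{L¹(ρ)} = Tr[|ρ^{1/2} f ρ^{1/2}|]. -/

import Mathlib

open Matrix Kronecker MeasureTheory
open scoped BigOperators ComplexOrder

attribute [local instance] Matrix.frobeniusNormedAddCommGroup Matrix.frobeniusNormedSpace

variable {n : Type*} [Fintype n] [DecidableEq n]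

/-- Functional calculus for Hermitian matrices (with real functions). -/
noncomputable def funcCalc (f : ℝ → ℂ) (M : Matrix n n ℂ) : Matrix n n ℂ :=
  if h : M.IsHermitian then
    (h.eigenvectorUnitary : Matrix n n ℂ) * Matrix.diagonal (fun i => f (h.eigenvalues i)) *
      (star h.eigenvectorUnitary : Matrix n n ℂ)
  else 0

/-- Matrix logarithm of a Hermitian matrix. -/
noncomputable def mlog (M : Matrix n n ℂ) : Matrix n n ℂ :=
  funcCalc (fun x => (Real.log x : ℂ)) M

/-- Matrix exponential of a Hermitian matrix. -/
noncomputable def mexp (M : Matrix n n ℂ) : Matrix n n ℂ :=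
  funcCalc (fun x => (Real.exp x : ℂ)) M

/-- Inverse square root `M^{-1/2}` of a positive definite matrix. -/
noncomputable def invSqrt (M : Matrix n n ℂ) : Matrix n n ℂ :=
  funcCalc (fun x => ((x ^ (-(1/2) : ℝ) : ℝ) : ℂ)) M

/-- Complex power `M^z` of a Hermitian (positive definite) matrix. -/
noncomputable def cpow (M : Matrix n n ℂ) (z : ℂ) : Matrix n n ℂ :=
  if h : M.IsHermitian then
    (h.eigenvectorUnitary : Matrix n n ℂ) *
      Matrix.diagonal (fun i => (h.eigenvalues i : ℂ) ^ z) *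
      (star h.eigenvectorUnitary : Matrix n n ℂ)
  else 0

/-- Quantum relative entropy `D(ρ‖σ) = Tr[ρ(log ρ - log σ)]` of density matrices. -/
noncomputable def relEnt (ρ σ : Matrix n n ℂ) : ℝ :=
  ((ρ * (mlog ρ - mlog σ)).trace).re

/-- Normalized relative entropy for not-necessarily-normalized positive operators. -/
noncomputable def relEntGen (f g : Matrix n n ℂ) : ℝ :=
  ((f.trace).re)⁻¹ * ((f * (mlog f - mlog g)).trace).re

/-- A density operator: positive semidefinite with unit trace. -/
def IsDensity (M : Matrix n n ℂ) : Prop := M.PosSemidef ∧ M.trace = 1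

/-- Support inclusion `supp ρ ⊆ supp σ`, phrased as kernel inclusion. -/
def SuppLE (ρ σ : Matrix n n ℂ) : Prop := ∀ v, σ *ᵥ v = 0 → ρ *ᵥ v = 0

/-- The positive semidefinite square root, as `Matrix.PosSemidef.sqrt` was defined in Mathlib
(Dec 2024); it has since been removed from Mathlib. -/
noncomputable def Matrix.PosSemidef.sqrt {𝕜 : Type*} [RCLike 𝕜] {A : Matrix n n 𝕜}
    (hA : A.PosSemidef) : Matrix n n 𝕜 :=
  hA.1.eigenvectorUnitary.1 * Matrix.diagonal ((↑) ∘ (√·) ∘ hA.1.eigenvalues) *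
    (star hA.1.eigenvectorUnitary : Matrix n n 𝕜)

open scoped MatrixOrder in
lemma Matrix.PosSemidef.sqrt_eq_cfcSqrt {A : Matrix n n ℂ} (hA : A.PosSemidef) :
    hA.sqrt = CFC.sqrt A := by
  have hmax : ∀ x : ℝ, √(max x 0) = √x := fun x => by
    rcases le_total x 0 with h | h
    · rw [max_eq_right h, Real.sqrt_zero, Real.sqrt_eq_zero_of_nonpos h]
    · rw [max_eq_left h]
  rw [CFC.sqrt_eq_cfc, cfc_nnreal_eq_real _ A hA.nonneg, hA.1.cfc_eq]
  simp [hmax, Matrix.PosSemidef.sqrt, Matrix.IsHermitian.cfc, Function.comp_def, Real.coe_toNNReal',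
    Unitary.conjStarAlgAut_apply]

open scoped MatrixOrder in
lemma Matrix.PosSemidef.posSemidef_sqrt {A : Matrix n n ℂ} (hA : A.PosSemidef) :
    hA.sqrt.PosSemidef := by
  rw [hA.sqrt_eq_cfcSqrt]
  exact (CFC.sqrt_nonneg A).posSemidef

open scoped MatrixOrder in
lemma Matrix.PosSemidef.eq_sqrt_of_sq_eq {B : Matrix n n ℂ} (hB : B.PosSemidef)
    {A : Matrix n n ℂ} (hA : A.PosSemidef) (hsq : B ^ 2 = A) : B = hA.sqrt := by
  rw [hA.sqrt_eq_cfcSqrt]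
  exact (CFC.sqrt_unique (by rw [← hsq, pow_two]) hB.nonneg).symm

/-- Trace norm `‖X‖₁ = Tr √(XᴴX)`. -/
noncomputable def trNorm (X : Matrix n n ℂ) : ℝ :=
  (((Matrix.posSemidef_conjTranspose_mul_self X).sqrt).trace).re

/-- Operator norm `‖M‖∞`. -/
noncomputable def opNorm (M : Matrix n n ℂ) : ℝ :=
  ‖(Matrix.toEuclideanCLM (𝕜 := ℂ) M : EuclideanSpace ℂ n →L[ℂ] EuclideanSpace ℂ n)‖

/-- The superoperator `T_g(f) = ∫₀^∞ (g+t)⁻¹ f (g+t)⁻¹ dt`. -/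
noncomputable def Tcal (g f : Matrix n n ℂ) : Matrix n n ℂ :=
  ∫ t in Set.Ioi (0 : ℝ), (g + (t : ℂ) • 1)⁻¹ * f * (g + (t : ℂ) • 1)⁻¹

/-- The probability density `β₀(t) = (π/2)(cosh(π t) + 1)⁻¹`. -/
noncomputable def beta0 (t : ℝ) : ℝ := (Real.pi / 2) * (Real.cosh (Real.pi * t) + 1)⁻¹

variable {A B : Type*} [Fintype A] [DecidableEq A] [Fintype B] [DecidableEq B]

/-- Partial trace over `B`. -/
noncomputable def ptraceB (M : Matrix (A × B) (A × B) ℂ) : Matrix A A ℂ :=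
  Matrix.of fun a a' => ∑ b, M (a, b) (a', b)

/-- Partial trace over `A`. -/
noncomputable def ptraceA (M : Matrix (A × B) (A × B) ℂ) : Matrix B B ℂ :=
  Matrix.of fun b b' => ∑ a, M (a, b) (a, b')


lemma opNorm_mul_le' (A B : Matrix n n ℂ) : opNorm (A * B) ≤ opNorm A * opNorm B := by
  unfold opNorm
  rw [_root_.map_mul]
  exact norm_mul_le _ _

lemma opNorm_le_one_of_star_mul_self (A : Matrix n n ℂ) (h : star A * A = 1) :
    opNorm A ≤ 1 := by
  have h2 : opNorm A * opNorm A = ‖star (Matrix.toEuclideanCLM (𝕜 := ℂ) A) *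
      Matrix.toEuclideanCLM (𝕜 := ℂ) A‖ := (CStarRing.norm_star_mul_self).symm
  rw [← map_star, ← _root_.map_mul, h, _root_.map_one] at h2
  have h3 : ‖(1 : EuclideanSpace ℂ n →L[ℂ] EuclideanSpace ℂ n)‖ ≤ 1 := by
    rw [ContinuousLinearMap.one_def]
    exact ContinuousLinearMap.norm_id_le
  nlinarith [norm_nonneg (Matrix.toEuclideanCLM (𝕜 := ℂ) A)]

lemma euclidean_apply_le_norm (x : EuclideanSpace ℂ n) (i : n) : ‖x i‖ ≤ ‖x‖ := by
  rw [EuclideanSpace.norm_eq]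
  have : ‖x i‖ = Real.sqrt (‖x i‖ ^ 2) := by rw [Real.sqrt_sq (norm_nonneg _)]
  rw [this]
  apply Real.sqrt_le_sqrt
  exact Finset.single_le_sum (f := fun j => ‖x j‖ ^ 2) (fun j _ => by positivity)
    (Finset.mem_univ i)

lemma diag_le_opNorm (A : Matrix n n ℂ) (i : n) : ‖A i i‖ ≤ opNorm A := by
  set e : EuclideanSpace ℂ n := EuclideanSpace.single i (1:ℂ) with he_def
  have he : ‖e‖ = 1 := by simp [he_def, EuclideanSpace.norm_single]
  have happ : Matrix.toEuclideanCLM (𝕜 := ℂ) A e =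
      (WithLp.equiv 2 (n → ℂ)).symm (A *ᵥ Pi.single i 1) := by
    rw [show e = (WithLp.equiv 2 (n → ℂ)).symm (Pi.single i 1) from rfl]
    exact Matrix.toEuclideanCLM_toLp A _
  have h1 : ‖A i i‖ ≤ ‖Matrix.toEuclideanCLM (𝕜 := ℂ) A e‖ := by
    have := euclidean_apply_le_norm (Matrix.toEuclideanCLM (𝕜 := ℂ) A e) i
    refine le_trans (le_of_eq ?_) this
    rw [happ]
    simp [Matrix.mulVec_single]
  calc ‖A i i‖ ≤ ‖Matrix.toEuclideanCLM (𝕜 := ℂ) A e‖ := h1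
    _ ≤ opNorm A * ‖e‖ := ContinuousLinearMap.le_opNorm _ _
    _ = opNorm A := by rw [he, mul_one]

lemma trace_mul_diagonal' (A : Matrix n n ℂ) (d : n → ℂ) :
    (A * Matrix.diagonal d).trace = ∑ i, A i i * d i := by
  simp [Matrix.trace, Matrix.diag, Matrix.mul_apply, Matrix.diagonal, Finset.sum_ite_eq]

theorem weighted_L1_duality
    (ρ : Matrix n n ℂ) (hρ : IsDensity ρ) (hpd : ρ.PosDef)
    (f : Matrix n n ℂ) (hf : f.IsHermitian) :
    trNorm (hρ.1.sqrt * f * hρ.1.sqrt) =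
      sSup {x : ℝ | ∃ g : Matrix n n ℂ, g.IsHermitian ∧ opNorm g ≤ 1 ∧
        x = ((hρ.1.sqrt * g * hρ.1.sqrt * f).trace).re} := by
  set S := hρ.1.sqrt with hSdef
  have hS : S.IsHermitian := hρ.1.posSemidef_sqrt.1
  have hM : (S * f * S).IsHermitian := by
    simpa [hS.eq] using Matrix.isHermitian_mul_mul_conjTranspose S hf
  set M := S * f * S with hMdef
  set U : Matrix n n ℂ := (hM.eigenvectorUnitary : Matrix n n ℂ) with hUdef
  have hU1 : U * star U = 1 := Matrix.mem_unitaryGroup_iff.mp hM.eigenvectorUnitary.2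
  have hU2 : star U * U = 1 := Matrix.mem_unitaryGroup_iff'.mp hM.eigenvectorUnitary.2
  set lam : n → ℝ := hM.eigenvalues with hlam
  have hspec : M = U * Matrix.diagonal (fun i => (lam i : ℂ)) * star U := by
    rw [hM.spectral_theorem, Unitary.conjStarAlgAut_apply]
    simp [Function.comp_def, hUdef, hlam]
  -- key trace identity
  have key : ∀ g : Matrix n n ℂ,
      (S * g * S * f).trace = ∑ i, (star U * g * U) i i * (lam i : ℂ) := by
    intro g
    have h1 : (S * g * S * f).trace = (g * M).trace := by
      rw [show S * g * S * f = (S * g) * (S * f) from by rw [mul_assoc],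
        Matrix.trace_mul_comm,
        show (S * f) * (S * g) = ((S * f * S) * g) from by simp only [mul_assoc],
        Matrix.trace_mul_comm, hMdef]
    rw [h1, hspec, show g * (U * Matrix.diagonal (fun i => (lam i : ℂ)) * star U)
        = (g * U) * Matrix.diagonal (fun i => (lam i : ℂ)) * star U from by
          simp only [mul_assoc],
      Matrix.trace_mul_cycle,
      show star U * (g * U) = star U * g * U from by rw [mul_assoc],
      trace_mul_diagonal']
  -- upper bound
  have hub : ∀ g : Matrix n n ℂ, g.IsHermitian → opNorm g ≤ 1 →
      ((S * g * S * f).trace).re ≤ ∑ i, |lam i| := by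
    intro g hg hgn
    rw [key g]
    rw [Complex.re_sum]
    apply Finset.sum_le_sum
    intro i _
    have hbound : ‖(star U * g * U) i i‖ ≤ 1 := by
      have b1 : opNorm (star U) ≤ 1 := by
        apply opNorm_le_one_of_star_mul_self
        rw [star_star]; exact hU1
      have b2 : opNorm U ≤ 1 := opNorm_le_one_of_star_mul_self U hU2
      have n1 : (0:ℝ) ≤ opNorm (star U) := norm_nonneg _
      have n2 : (0:ℝ) ≤ opNorm g := norm_nonneg _
      have n3 : (0:ℝ) ≤ opNorm U := norm_nonneg _
      calc ‖(star U * g * U) i i‖ ≤ opNorm (star U * g * U) := diag_le_opNorm _ i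
        _ ≤ opNorm (star U * g) * opNorm U := opNorm_mul_le' _ _
        _ ≤ (opNorm (star U) * opNorm g) * opNorm U :=
            mul_le_mul_of_nonneg_right (opNorm_mul_le' _ _) n3
        _ ≤ 1 := by
            have hxy : opNorm (star U) * opNorm g ≤ 1 := by nlinarith
            nlinarith
    have hre : ((star U * g * U) i i * (lam i : ℂ)).re
        = ((star U * g * U) i i).re * lam i := by
      simp [Complex.mul_re]
    rw [hre]
    have habs : |((star U * g * U) i i).re| ≤ 1 :=
      le_trans (Complex.abs_re_le_norm _) hbound
    rcases le_or_gt 0 (lam i) with h | h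
    · rw [abs_of_nonneg h]
      nlinarith [abs_le.mp habs]
    · rw [abs_of_neg h]
      nlinarith [abs_le.mp habs]
  -- trace norm equals sum of absolute eigenvalues
  have htr : trNorm M = ∑ i, |lam i| := by
    set D' : Matrix n n ℂ := Matrix.diagonal (fun i => ((|lam i| : ℝ) : ℂ)) with hD'
    have hD'pos : D'.PosSemidef := by
      refine Matrix.posSemidef_diagonal_iff.mpr fun i => ?_
      rw [Complex.zero_le_real]
      exact abs_nonneg _
    have hB : (U * D' * star U).PosSemidef := by
      have := hD'pos.mul_mul_conjTranspose_same U
      simpa [Matrix.star_eq_conjTranspose] using this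
    have hsq : (U * D' * star U) ^ 2 = Mᴴ * M := by
      have hDD : D' * D' = Matrix.diagonal (fun i => (lam i : ℂ) * (lam i : ℂ)) := by
        have hfun : (fun i => ((|lam i| : ℝ) : ℂ) * ((|lam i| : ℝ) : ℂ))
            = fun i => (lam i : ℂ) * (lam i : ℂ) := by
          funext i
          rw [← Complex.ofReal_mul, ← Complex.ofReal_mul, abs_mul_abs_self]
        rw [hD', Matrix.diagonal_mul_diagonal, hfun]
      rw [hM.eq, hspec]
      rw [pow_two]
      calc U * D' * star U * (U * D' * star U)
          = U * (D' * (star U * U) * D') * star U := by simp only [mul_assoc]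
        _ = U * (D' * D') * star U := by rw [hU2]; simp only [mul_one, mul_assoc]
        _ = U * Matrix.diagonal (fun i => (lam i : ℂ) * (lam i : ℂ)) * star U := by
            rw [hDD]
        _ = U * Matrix.diagonal (fun i => (lam i : ℂ)) * star U *
            (U * Matrix.diagonal (fun i => (lam i : ℂ)) * star U) := by
            rw [show U * Matrix.diagonal (fun i => (lam i : ℂ)) * star U *
                (U * Matrix.diagonal (fun i => (lam i : ℂ)) * star U)
                = U * (Matrix.diagonal (fun i => (lam i : ℂ)) * (star U * U) *
                  Matrix.diagonal (fun i => (lam i : ℂ))) * star U from by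
                  simp only [mul_assoc], hU2]
            simp only [mul_one, Matrix.diagonal_mul_diagonal, mul_assoc]
    have hsqrt : U * D' * star U = (Matrix.posSemidef_conjTranspose_mul_self M).sqrt :=
      hB.eq_sqrt_of_sq_eq _ hsq
    unfold trNorm
    rw [← hsqrt]
    rw [Matrix.trace_mul_cycle, hU2, one_mul]
    rw [hD', Matrix.trace_diagonal]
    rw [Complex.re_sum]
    simp
  -- the achieving g₀
  set d : n → ℂ := fun i => if 0 ≤ lam i then (1 : ℂ) else -1 with hd
  have hdstar : ∀ i, star (d i) = d i := by
    intro i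
    by_cases h : 0 ≤ lam i <;> simp [hd, h]
  set g₀ : Matrix n n ℂ := U * Matrix.diagonal d * star U with hg₀
  have hg₀herm : g₀.IsHermitian := by
    have : (Matrix.diagonal d).IsHermitian := by
      have hsd : star d = d := funext hdstar
      rw [Matrix.IsHermitian, Matrix.diagonal_conjTranspose, hsd]
    have h2 := Matrix.isHermitian_mul_mul_conjTranspose U this
    simpa [Matrix.star_eq_conjTranspose, hg₀] using h2
  have hg₀sq : star g₀ * g₀ = 1 := by
    rw [Matrix.star_eq_conjTranspose, hg₀herm.eq]
    have hdd : Matrix.diagonal d * Matrix.diagonal d = 1 := by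
      rw [Matrix.diagonal_mul_diagonal]
      have hdd1 : (fun i => d i * d i) = fun _ => (1:ℂ) := by
        funext i
        by_cases h : 0 ≤ lam i <;> simp [hd, h]
      rw [hdd1, Matrix.diagonal_one]
    calc g₀ * g₀ = U * (Matrix.diagonal d * (star U * U) * Matrix.diagonal d) * star U := by
          rw [hg₀]; simp only [mul_assoc]
      _ = U * (Matrix.diagonal d * Matrix.diagonal d) * star U := by
          rw [hU2]; simp only [mul_one, mul_assoc]
      _ = 1 := by rw [hdd, mul_one, hU1]
  have hg₀norm : opNorm g₀ ≤ 1 := opNorm_le_one_of_star_mul_self g₀ hg₀sq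
  have hg₀val : ((S * g₀ * S * f).trace).re = ∑ i, |lam i| := by
    rw [key g₀]
    have hcent : star U * g₀ * U = Matrix.diagonal d := by
      calc star U * g₀ * U = (star U * U) * Matrix.diagonal d * (star U * U) := by
            rw [hg₀]; simp only [mul_assoc]
        _ = Matrix.diagonal d := by rw [hU2, one_mul, mul_one]
    rw [hcent]
    rw [Complex.re_sum]
    apply Finset.sum_congr rfl
    intro i _
    rw [Matrix.diagonal_apply_eq]
    rcases le_or_gt 0 (lam i) with h | h
    · simp [hd, h, abs_of_nonneg h]
    · simp [hd, not_le.mpr h, abs_of_neg h]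
  -- conclude
  rw [htr]
  have hmem : (∑ i, |lam i|) ∈ {x : ℝ | ∃ g : Matrix n n ℂ, g.IsHermitian ∧ opNorm g ≤ 1 ∧
      x = ((S * g * S * f).trace).re} := ⟨g₀, hg₀herm, hg₀norm, hg₀val.symm⟩
  have hub' : ∀ x ∈ {x : ℝ | ∃ g : Matrix n n ℂ, g.IsHermitian ∧ opNorm g ≤ 1 ∧
      x = ((S * g * S * f).trace).re}, x ≤ ∑ i, |lam i| := by
    rintro x ⟨g, hg1, hg2, rfl⟩
    exact hub g hg1 hg2
  exact le_antisymm (le_csSup ⟨_, hub'⟩ hmem) (csSup_le ⟨_, hmem⟩ hub')
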